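/- Let Φ_K : ℝ → ℝ be supported on [-1,1] with |Φ_K(t)| ≤ C_s |t|^s for all t ∈ [-1,1], and let Φ_X be the characteristic function of a density f satisfying ∫_ℝ |Φ_X(t)|² |t|^{2s} dt ≤ R². Then for every h > 0, |h ∫_{-1/h}^{1/h} Φ_K(h t) Φ_X(t) dt| ≤ √2 · C_s · R · h^{s+1/2}. -/

import Mathlib

open MeasureTheory Real

/-- Bias bound: if `Φ_K` is supported on `[-1,1]` with `|Φ_K t| ≤ C_s |t|^s`
there, and `∫ |Φ_X(t)|² |t|^{2s} dt ≤ R²`, then for all `h > 0`,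
`|h ∫_{-1/h}^{1/h} Φ_K(ht) Φ_X(t) dt| ≤ √2 · C_s · R · h^{s+1/2}`. -/
theorem bias_bound_atomic_deconvolution
    (s R Cs : ℝ) (hs : 0 < s) (hR : 0 < R) (hCs : 0 < Cs)
    (ΦK : ℝ → ℝ) (hKmeas : Measurable ΦK)
    (hKsupp : ∀ t : ℝ, t ∉ Set.Icc (-1 : ℝ) 1 → ΦK t = 0)
    (hKbound : ∀ t ∈ Set.Icc (-1 : ℝ) 1, |ΦK t| ≤ Cs * |t| ^ s)
    (ΦX : ℝ → ℂ) (hXmeas : Measurable ΦX)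
    (hXint : Integrable (fun t => ‖ΦX t‖ ^ 2 * |t| ^ (2 * s)))
    (hXbound : ∫ t : ℝ, ‖ΦX t‖ ^ 2 * |t| ^ (2 * s) ≤ R ^ 2) :
    ∀ h : ℝ, 0 < h →
      Integrable (fun t => (ΦK (h * t) : ℂ) * ΦX t)
        (Measure.restrict volume (Set.Icc (-(1 / h)) (1 / h))) →
      ‖(h : ℂ) * ∫ t in Set.Icc (-(1 / h)) (1 / h), (ΦK (h * t) : ℂ) * ΦX t‖
        ≤ Real.sqrt 2 * Cs * R * h ^ (s + 1 / 2) := by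
  intro h hh hInt
  set I : Set ℝ := Set.Icc (-(1 / h)) (1 / h) with hI
  set μ : Measure ℝ := volume.restrict I with hμ
  have hvolI : volume I = ENNReal.ofReal (2 / h) := by
    rw [hI, Real.volume_Icc]
    congr 1
    ring
  haveI : IsFiniteMeasure μ := by
    constructor
    rw [hμ, Measure.restrict_apply_univ, hvolI]
    exact ENNReal.ofReal_lt_top
  set F : ℝ → ℝ := fun t => |ΦK (h * t)| * |t| ^ (-s) with hF
  set G : ℝ → ℝ := fun t => ‖ΦX t‖ * |t| ^ s with hG
  have hFnonneg : ∀ t, 0 ≤ F t := fun t => by positivity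
  have hGnonneg : ∀ t, 0 ≤ G t := fun t => by positivity
  have hFmeas : Measurable F :=
    ((hKmeas.comp (measurable_id.const_mul h)).abs).mul (measurable_abs.pow_const _)
  have hGmeas : Measurable G := hXmeas.norm.mul (measurable_abs.pow_const _)
  -- bound on F
  have hFbound : ∀ t, F t ≤ Cs * h ^ s := by
    intro t
    rcases eq_or_ne t 0 with rfl | ht
    · have : F 0 = 0 := by
        simp [hF, Real.zero_rpow (neg_ne_zero.2 hs.ne')]
      rw [this]; positivity
    · by_cases htI : h * t ∈ Set.Icc (-1 : ℝ) 1
      · have h1 : |ΦK (h * t)| ≤ Cs * (h ^ s * |t| ^ s) := by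
          have := hKbound _ htI
          rwa [abs_mul, abs_of_pos hh, Real.mul_rpow hh.le (abs_nonneg t)] at this
        have h2 : F t ≤ Cs * (h ^ s * |t| ^ s) * |t| ^ (-s) :=
          mul_le_mul_of_nonneg_right h1 (by positivity)
        have h3 : |t| ^ s * |t| ^ (-s) = 1 := by
          rw [← Real.rpow_add (abs_pos.2 ht)]
          simp
        calc F t ≤ Cs * (h ^ s * |t| ^ s) * |t| ^ (-s) := h2
          _ = Cs * h ^ s * (|t| ^ s * |t| ^ (-s)) := by ring
          _ = Cs * h ^ s := by rw [h3, mul_one]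
      · have : ΦK (h * t) = 0 := hKsupp _ htI
        have : F t = 0 := by simp [hF, this]
        rw [this]; positivity
  -- Memℒp statements
  have hFmem : MemLp F (ENNReal.ofReal 2) μ := by
    refine MemLp.of_bound (hFmeas.aestronglyMeasurable) (Cs * h ^ s) ?_
    filter_upwards with t
    rw [Real.norm_of_nonneg (hFnonneg t)]
    exact hFbound t
  have hGsq : ∀ t : ℝ, G t ^ (2 : ℕ) = ‖ΦX t‖ ^ 2 * |t| ^ (2 * s) := by
    intro t
    rw [hG]
    rw [mul_pow, ← Real.rpow_natCast (|t| ^ s) 2, ← Real.rpow_mul (abs_nonneg t)]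
    norm_num [mul_comm s 2]
  have hGsqInt : Integrable (fun t => G t ^ (2 : ℕ)) μ := by
    refine (hXint.restrict (s := I)).congr ?_
    filter_upwards with t using (hGsq t).symm
  have hGmem : MemLp G (ENNReal.ofReal 2) μ := by
    have : MemLp G 2 μ := (memLp_two_iff_integrable_sq hGmeas.aestronglyMeasurable).2 hGsqInt
    convert this using 2
    norm_num
  -- Cauchy–Schwarz
  have hconj : Real.HolderConjugate 2 2 := ⟨by norm_num, by norm_num, by norm_num⟩
  have hCS := MeasureTheory.integral_mul_le_Lp_mul_Lq_of_nonneg hconj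
    (Filter.Eventually.of_forall hFnonneg) (Filter.Eventually.of_forall hGnonneg) hFmem hGmem
  -- bound ∫ F^2
  have hA : ∫ t, F t ^ (2 : ℝ) ∂μ ≤ (Cs * h ^ s) ^ (2 : ℝ) * (2 / h) := by
    have hle : ∀ t, F t ^ (2 : ℝ) ≤ (Cs * h ^ s) ^ (2 : ℝ) := fun t =>
      Real.rpow_le_rpow (hFnonneg t) (hFbound t) (by norm_num)
    calc ∫ t, F t ^ (2 : ℝ) ∂μ ≤ ∫ _t, (Cs * h ^ s) ^ (2 : ℝ) ∂μ := by
          refine integral_mono_of_nonneg (Filter.Eventually.of_forall fun t => by positivity)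
            (integrable_const _) (Filter.Eventually.of_forall hle)
      _ = (μ Set.univ).toReal * (Cs * h ^ s) ^ (2 : ℝ) := by
          rw [integral_const, smul_eq_mul, Measure.real]
      _ = (Cs * h ^ s) ^ (2 : ℝ) * (2 / h) := by
          rw [hμ, Measure.restrict_apply_univ, hvolI, ENNReal.toReal_ofReal (by positivity)]
          ring
  have hB : ∫ t, G t ^ (2 : ℝ) ∂μ ≤ R ^ 2 := by
    have e1 : ∫ t, G t ^ (2 : ℝ) ∂μ = ∫ t in I, ‖ΦX t‖ ^ 2 * |t| ^ (2 * s) := by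
      refine integral_congr_ae (Filter.Eventually.of_forall fun t => ?_)
      show G t ^ (2 : ℝ) = ‖ΦX t‖ ^ 2 * |t| ^ (2 * s)
      rw [show (2 : ℝ) = ((2 : ℕ) : ℝ) by norm_num, Real.rpow_natCast, hGsq t]
      norm_num
    rw [e1]
    calc ∫ t in I, ‖ΦX t‖ ^ 2 * |t| ^ (2 * s)
        ≤ ∫ t, ‖ΦX t‖ ^ 2 * |t| ^ (2 * s) :=
          setIntegral_le_integral hXint (Filter.Eventually.of_forall fun t => by positivity)
      _ ≤ R ^ 2 := hXbound
  -- a.e. identity F*G = ‖integrand‖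
  have h0 : ∀ᵐ t ∂μ, t ≠ (0 : ℝ) := by
    refine ae_restrict_of_ae ?_
    rw [ae_iff]
    simpa using Real.volume_singleton (x := (0 : ℝ)) (x := (0 : ℝ))
  have hFG : ∫ t, ‖(ΦK (h * t) : ℂ) * ΦX t‖ ∂μ = ∫ t, F t * G t ∂μ := by
    refine integral_congr_ae ?_
    filter_upwards [h0] with t ht
    rw [norm_mul, Complex.norm_real, Real.norm_eq_abs, hF, hG]
    have h3 : |t| ^ (-s) * |t| ^ s = 1 := by
      rw [← Real.rpow_add (abs_pos.2 ht)]; simp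
    calc |ΦK (h * t)| * ‖ΦX t‖
        = |ΦK (h * t)| * ‖ΦX t‖ * (|t| ^ (-s) * |t| ^ s) := by rw [h3, mul_one]
      _ = |ΦK (h * t)| * |t| ^ (-s) * (‖ΦX t‖ * |t| ^ s) := by ring
  -- assemble
  have hnorm : ‖(h : ℂ) * ∫ t in I, (ΦK (h * t) : ℂ) * ΦX t‖
      ≤ h * ∫ t, F t * G t ∂μ := by
    rw [norm_mul, Complex.norm_real, Real.norm_eq_abs, abs_of_pos hh]
    exact mul_le_mul_of_nonneg_left
      (le_of_le_of_eq (norm_integral_le_integral_norm _) hFG) hh.le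
  have hApos : (0 : ℝ) ≤ ∫ t, F t ^ (2 : ℝ) ∂μ :=
    integral_nonneg fun t => by positivity
  have hBpos : (0 : ℝ) ≤ ∫ t, G t ^ (2 : ℝ) ∂μ :=
    integral_nonneg fun t => by positivity
  have hA' : (∫ t, F t ^ (2 : ℝ) ∂μ) ^ (1 / 2 : ℝ)
      ≤ Cs * h ^ s * Real.sqrt (2 / h) := by
    calc (∫ t, F t ^ (2 : ℝ) ∂μ) ^ (1 / 2 : ℝ)
        ≤ ((Cs * h ^ s) ^ (2 : ℝ) * (2 / h)) ^ (1 / 2 : ℝ) :=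
          Real.rpow_le_rpow hApos hA (by norm_num)
      _ = Cs * h ^ s * Real.sqrt (2 / h) := by
          rw [Real.mul_rpow (by positivity) (by positivity),
            ← Real.rpow_mul (by positivity : (0:ℝ) ≤ Cs * h ^ s), Real.sqrt_eq_rpow]
          norm_num
  have hB' : (∫ t, G t ^ (2 : ℝ) ∂μ) ^ (1 / 2 : ℝ) ≤ R := by
    calc (∫ t, G t ^ (2 : ℝ) ∂μ) ^ (1 / 2 : ℝ)
        ≤ (R ^ 2 : ℝ) ^ (1 / 2 : ℝ) := Real.rpow_le_rpow hBpos hB (by norm_num)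
      _ = R := by
          rw [show (R ^ 2 : ℝ) = R ^ (2 : ℝ) by
              rw [show (2:ℝ) = ((2:ℕ):ℝ) by norm_num, Real.rpow_natCast],
            ← Real.rpow_mul hR.le]
          norm_num
  have hfinal : h * (Cs * h ^ s * Real.sqrt (2 / h) * R)
      = Real.sqrt 2 * Cs * R * h ^ (s + 1 / 2) := by
    have e1 : Real.sqrt (2 / h) = Real.sqrt 2 / Real.sqrt h := Real.sqrt_div (by norm_num) h
    have e2 : h ^ (s + 1 / 2 : ℝ) = h ^ s * Real.sqrt h := by
      rw [Real.rpow_add hh, ← Real.sqrt_eq_rpow]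
    calc h * (Cs * h ^ s * Real.sqrt (2 / h) * R)
        = Real.sqrt 2 * Cs * R * (h ^ s * (h / Real.sqrt h)) := by rw [e1]; ring
      _ = Real.sqrt 2 * Cs * R * (h ^ s * Real.sqrt h) := by rw [Real.div_sqrt]
      _ = Real.sqrt 2 * Cs * R * h ^ (s + 1 / 2 : ℝ) := by rw [e2]
  calc ‖(h : ℂ) * ∫ t in I, (ΦK (h * t) : ℂ) * ΦX t‖
      ≤ h * ∫ t, F t * G t ∂μ := hnorm
    _ ≤ h * ((∫ t, F t ^ (2:ℝ) ∂μ) ^ (1/2:ℝ) * (∫ t, G t ^ (2:ℝ) ∂μ) ^ (1/2:ℝ)) :=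
        mul_le_mul_of_nonneg_left hCS hh.le
    _ ≤ h * (Cs * h ^ s * Real.sqrt (2 / h) * R) := by
        refine mul_le_mul_of_nonneg_left ?_ hh.le
        exact mul_le_mul hA' hB' (Real.rpow_nonneg hBpos _) (by positivity)
    _ = Real.sqrt 2 * Cs * R * h ^ (s + 1 / 2) := hfinal
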